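/- Let (𝔡, 𝔤, 𝔤*) be a Manin triple. Then the cobracket δ: 𝔤 → ∧²(𝔤) defined as the dual of the Lie bracket on 𝔤* endows 𝔤 with the structure of a Lie bialgebra, i.e. δ is a 1-cocycle for the adjoint action of 𝔤 on ∧²(𝔤) and its dual map ∧²(𝔤*) → 𝔤* satisfies the Jacobi identity. -/

import Mathlib

set_option linter.unusedSectionVars false
set_option maxHeartbeats 1000000


/-!
STATEMENT 1: Let `(𝔡, 𝔤, 𝔤*)` be a Manin triple: `𝔡` a finite-dimensional Lie algebra
with a nondegenerate invariant symmetric pairing `B`, and `𝔤, 𝔤* ⊂ 𝔡` complementary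
Lagrangian subalgebras.  Then the cobracket `δ : 𝔤 → ∧²𝔤` defined as the dual of the Lie
bracket on `𝔤*` (characterized by `⟨δ(x), ξ ⊗ η⟩ = ⟨x, ⁅ξ,η⁆⟩` for `ξ, η ∈ 𝔤*`)
exists, is unique, and endows `𝔤` with the structure of a Lie bialgebra: `δ` takes
values in antisymmetric tensors, is a Chevalley–Eilenberg 1-cocycle for the adjoint
action of `𝔤` on `𝔤 ⊗ 𝔤`, and its dual map (the bracket of `𝔤*`, transported by the
pairing) satisfies the Jacobi identity.
-/

open TensorProduct

noncomputable section

variable {k : Type*} [Field k] [CharZero k]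
variable {D : Type*} [LieRing D] [LieAlgebra k D] [FiniteDimensional k D]

/-- Pairing of `g ⊗ g` against `ξ ⊗ η ∈ 𝔡 ⊗ 𝔡` induced by a bilinear form `B` on `𝔡`. -/
def pairSq (B : D →ₗ[k] D →ₗ[k] k) (g : LieSubalgebra k D) (ξ η : D) :
    (g ⊗[k] g) →ₗ[k] k :=
  (TensorProduct.lid k k).toLinearMap ∘ₗ
    TensorProduct.map ((B.flip ξ).comp g.toSubmodule.subtype)
      ((B.flip η).comp g.toSubmodule.subtype)

/-- The adjoint action of `x ∈ 𝔤` on `𝔤 ⊗ 𝔤`. -/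
def adSq (g : LieSubalgebra k D) (x : g) : (g ⊗[k] g) →ₗ[k] (g ⊗[k] g) :=
  TensorProduct.map ((LieAlgebra.ad k g) x) LinearMap.id
    + TensorProduct.map LinearMap.id ((LieAlgebra.ad k g) x)

section Aux

variable (B : D →ₗ[k] D →ₗ[k] k) (g g' : LieSubalgebra k D)

lemma pairSq_tmul (ξ η : D) (a b : g) :
    pairSq B g ξ η (a ⊗ₜ[k] b) = B (a : D) ξ * B (b : D) η := by
  rfl

lemma pairSq_add_left (ξ₁ ξ₂ η : D) :
    pairSq B g (ξ₁ + ξ₂) η = pairSq B g ξ₁ η + pairSq B g ξ₂ η := by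
  apply TensorProduct.ext'
  intro a b
  simp [pairSq_tmul, add_mul]

lemma pairSq_add_right (ξ η₁ η₂ : D) :
    pairSq B g ξ (η₁ + η₂) = pairSq B g ξ η₁ + pairSq B g ξ η₂ := by
  apply TensorProduct.ext'
  intro a b
  simp [pairSq_tmul, mul_add]

lemma pairSq_smul_left (c : k) (ξ η : D) :
    pairSq B g (c • ξ) η = c • pairSq B g ξ η := by
  apply TensorProduct.ext'
  intro a b
  simp [pairSq_tmul]
  ring

lemma pairSq_smul_right (c : k) (ξ η : D) :
    pairSq B g ξ (c • η) = c • pairSq B g ξ η := by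
  apply TensorProduct.ext'
  intro a b
  simp [pairSq_tmul]
  ring

lemma pairSq_left_zero (hiso : ∀ x y : D, x ∈ g → y ∈ g → B x y = 0)
    {m : D} (hm : m ∈ g) (η : D) : pairSq B g m η = 0 := by
  apply TensorProduct.ext'
  intro a b
  simp [pairSq_tmul, hiso (a : D) m a.2 hm]

lemma pairSq_right_zero (hiso : ∀ x y : D, x ∈ g → y ∈ g → B x y = 0)
    (ξ : D) {m : D} (hm : m ∈ g) : pairSq B g ξ m = 0 := by
  apply TensorProduct.ext'
  intro a b
  simp [pairSq_tmul, hiso (b : D) m b.2 hm]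

lemma pairSq_zero_left (η : D) : pairSq B g 0 η = 0 := by
  apply TensorProduct.ext'
  intro a b
  simp [pairSq_tmul]

lemma pairSq_zero_right (ξ : D) : pairSq B g ξ 0 = 0 := by
  apply TensorProduct.ext'
  intro a b
  simp [pairSq_tmul]

lemma pairSq_sum_left {ι : Type*} (s : Finset ι) (v : ι → D) (η : D) (t : g ⊗[k] g) :
    pairSq B g (∑ i ∈ s, v i) η t = ∑ i ∈ s, pairSq B g (v i) η t := by
  classical
  induction s using Finset.induction with
  | empty => simp [pairSq_zero_left]
  | insert _ _ h ih => rw [Finset.sum_insert h, Finset.sum_insert h, pairSq_add_left,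
      LinearMap.add_apply, ih]

lemma pairSq_sum_right {ι : Type*} (s : Finset ι) (ξ : D) (v : ι → D) (t : g ⊗[k] g) :
    pairSq B g ξ (∑ i ∈ s, v i) t = ∑ i ∈ s, pairSq B g ξ (v i) t := by
  classical
  induction s using Finset.induction with
  | empty => simp [pairSq_zero_right]
  | insert _ _ h ih => rw [Finset.sum_insert h, Finset.sum_insert h, pairSq_add_right,
      LinearMap.add_apply, ih]

lemma lieSum_right {L : Type*} [LieRing L] {ι : Type*} (s : Finset ι) (x : L) (v : ι → L) :
    ⁅x, ∑ i ∈ s, v i⁆ = ∑ i ∈ s, ⁅x, v i⁆ := by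
  classical
  induction s using Finset.induction with
  | empty => simp
  | insert _ _ h ih => simp [Finset.sum_insert h, ih]

lemma lieSum_left {L : Type*} [LieRing L] {ι : Type*} (s : Finset ι) (v : ι → L) (y : L) :
    ⁅∑ i ∈ s, v i, y⁆ = ∑ i ∈ s, ⁅v i, y⁆ := by
  classical
  induction s using Finset.induction with
  | empty => simp
  | insert _ _ h ih => simp [Finset.sum_insert h, ih]

/-- The key scalar identity behind the cocycle condition. -/
lemma manin_scalar
    (hBsymm : ∀ x y, B x y = B y x)
    (hBinv : ∀ x y z, B ⁅x, y⁆ z = B x ⁅y, z⁆)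
    (hiso : ∀ x y : D, x ∈ g → y ∈ g → B x y = 0)
    (hiso' : ∀ x y : D, x ∈ g' → y ∈ g' → B x y = 0)
    (hcompl : IsCompl g.toSubmodule g'.toSubmodule)
    (x y ξ η : D) (hx : x ∈ g) (hy : y ∈ g) (hξ : ξ ∈ g') (hη : η ∈ g') :
    B y ⁅(g'.toSubmodule.linearProjOfIsCompl g.toSubmodule hcompl.symm ⁅ξ, x⁆ : D), η⁆
      + B y ⁅ξ, (g'.toSubmodule.linearProjOfIsCompl g.toSubmodule hcompl.symm ⁅η, x⁆ : D)⁆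
      - B x ⁅(g'.toSubmodule.linearProjOfIsCompl g.toSubmodule hcompl.symm ⁅ξ, y⁆ : D), η⁆
      - B x ⁅ξ, (g'.toSubmodule.linearProjOfIsCompl g.toSubmodule hcompl.symm ⁅η, y⁆ : D)⁆
      = B ⁅x, y⁆ ⁅ξ, η⁆ := by
  set π : D →ₗ[k] g.toSubmodule := g.toSubmodule.linearProjOfIsCompl g'.toSubmodule hcompl
    with hπdef
  set π' : D →ₗ[k] g'.toSubmodule :=
    g'.toSubmodule.linearProjOfIsCompl g.toSubmodule hcompl.symm with hπ'def
  have hdec : ∀ u : D, (π u : D) + (π' u : D) = u := fun u =>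
    Submodule.projection_add_projection_eq_self hcompl u
  have hπg : ∀ u : D, (π u : D) ∈ g := fun u => (π u).2
  have hπ'g' : ∀ u : D, (π' u : D) ∈ g' := fun u => (π' u).2
  set S : D → D → k := fun u v => B (π u : D) v with hSdef
  have hS : ∀ u v : D, S u v + S v u = B u v := by
    intro u v
    have e1 : B u v = B (π u : D) v + B (π' u : D) v := by
      conv_lhs => rw [← hdec u]
      simp [map_add]
    have e2 : B (π' u : D) v = B (π' u : D) (π v : D) := by
      conv_lhs => rw [← hdec v]
      simp [map_add, hiso' _ _ (hπ'g' u) (hπ'g' v)]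
    have e3 : B (π v : D) u = B (π v : D) (π' u : D) := by
      conv_lhs => rw [← hdec u]
      simp [map_add, hiso _ _ (hπg v) (hπg u)]
    have e4 : B (π v : D) (π' u : D) = B (π' u : D) (π v : D) := hBsymm _ _
    simp only [hSdef]
    linear_combination -e1 + e3 + e4 - e2
  have hT1 : ∀ m w η' : D, m ∈ g → η' ∈ g' →
      B m ⁅(π' w : D), η'⁆ = -S ⁅m, η'⁆ w := by
    intro m w η' hm hη'
    have a1 : B m ⁅(π' w : D), η'⁆ = -B m ⁅η', (π' w : D)⁆ := by
      rw [← lie_skew, map_neg]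
    have a2 : B m ⁅η', (π' w : D)⁆ = B ⁅m, η'⁆ (π' w : D) := (hBinv m η' _).symm
    have a3 : B ⁅m, η'⁆ (π' w : D) = B (π ⁅m, η'⁆ : D) (π' w : D) := by
      conv_lhs => rw [← hdec ⁅m, η'⁆]
      simp [map_add, hiso' _ _ (hπ'g' ⁅m, η'⁆) (hπ'g' w)]
    have a4 : B (π ⁅m, η'⁆ : D) (π' w : D) = B (π ⁅m, η'⁆ : D) w := by
      conv_rhs => rw [← hdec w]
      simp [map_add, hiso _ _ (hπg ⁅m, η'⁆) (hπg w)]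
    rw [a1, a2, a3, a4]
  have hT2 : ∀ m ξ' w : D, m ∈ g → ξ' ∈ g' →
      B m ⁅ξ', (π' w : D)⁆ = S ⁅m, ξ'⁆ w := by
    intro m ξ' w hm hξ'
    have a2 : B m ⁅ξ', (π' w : D)⁆ = B ⁅m, ξ'⁆ (π' w : D) := (hBinv m ξ' _).symm
    have a3 : B ⁅m, ξ'⁆ (π' w : D) = B (π ⁅m, ξ'⁆ : D) (π' w : D) := by
      conv_lhs => rw [← hdec ⁅m, ξ'⁆]
      simp [map_add, hiso' _ _ (hπ'g' ⁅m, ξ'⁆) (hπ'g' w)]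
    have a4 : B (π ⁅m, ξ'⁆ : D) (π' w : D) = B (π ⁅m, ξ'⁆ : D) w := by
      conv_rhs => rw [← hdec w]
      simp [map_add, hiso _ _ (hπg ⁅m, ξ'⁆) (hπg w)]
    rw [a2, a3, a4]
  have sneg : ∀ u v : D, S (-u) (-v) = S u v := by
    intro u v
    simp [hSdef]
  have s1 : S ⁅y, ξ⁆ ⁅η, x⁆ = S ⁅ξ, y⁆ ⁅x, η⁆ := by
    rw [← sneg ⁅ξ, y⁆ ⁅x, η⁆, lie_skew, lie_skew]
  have s2 : S ⁅x, ξ⁆ ⁅η, y⁆ = S ⁅ξ, x⁆ ⁅y, η⁆ := by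
    rw [← sneg ⁅ξ, x⁆ ⁅y, η⁆, lie_skew, lie_skew]
  have hS1 : S ⁅y, η⁆ ⁅ξ, x⁆ + S ⁅ξ, x⁆ ⁅y, η⁆ = B ⁅y, η⁆ ⁅ξ, x⁆ := hS _ _
  have hS2 : S ⁅ξ, y⁆ ⁅x, η⁆ + S ⁅x, η⁆ ⁅ξ, y⁆ = B ⁅ξ, y⁆ ⁅x, η⁆ := hS _ _
  have hFin : B ⁅ξ, y⁆ ⁅x, η⁆ - B ⁅y, η⁆ ⁅ξ, x⁆ = B ⁅x, y⁆ ⁅ξ, η⁆ := by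
    have f1 : B ⁅x, y⁆ ⁅ξ, η⁆ = B x ⁅y, ⁅ξ, η⁆⁆ := hBinv x y ⁅ξ, η⁆
    have f2 : ⁅y, ⁅ξ, η⁆⁆ = ⁅⁅y, ξ⁆, η⁆ + ⁅ξ, ⁅y, η⁆⁆ := leibniz_lie y ξ η
    have f3 : B x ⁅⁅y, ξ⁆, η⁆ = B ⁅ξ, y⁆ ⁅x, η⁆ := by
      have g1 : B x ⁅⁅y, ξ⁆, η⁆ = -B x ⁅η, ⁅y, ξ⁆⁆ := by rw [← lie_skew, map_neg]
      have g2 : B x ⁅η, ⁅y, ξ⁆⁆ = B ⁅x, η⁆ ⁅y, ξ⁆ := (hBinv x η _).symm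
      have g3 : B ⁅x, η⁆ ⁅y, ξ⁆ = -B ⁅x, η⁆ ⁅ξ, y⁆ := by
        rw [← lie_skew ξ y, map_neg, neg_neg]
      rw [g1, g2, g3, neg_neg, hBsymm]
    have f4 : B x ⁅ξ, ⁅y, η⁆⁆ = -B ⁅y, η⁆ ⁅ξ, x⁆ := by
      have g1 : B x ⁅ξ, ⁅y, η⁆⁆ = B ⁅x, ξ⁆ ⁅y, η⁆ := (hBinv x ξ _).symm
      have g2 : B ⁅x, ξ⁆ ⁅y, η⁆ = B ⁅y, η⁆ ⁅x, ξ⁆ := hBsymm _ _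
      have g3 : B ⁅y, η⁆ ⁅x, ξ⁆ = -B ⁅y, η⁆ ⁅ξ, x⁆ := by
        rw [← lie_skew ξ x, map_neg, neg_neg]
      rw [g1, g2, g3]
    rw [f1, f2, map_add, f3, f4]
    ring
  have t1 : B y ⁅(π' ⁅ξ, x⁆ : D), η⁆ = -S ⁅y, η⁆ ⁅ξ, x⁆ := hT1 y ⁅ξ, x⁆ η hy hη
  have t2 : B y ⁅ξ, (π' ⁅η, x⁆ : D)⁆ = S ⁅y, ξ⁆ ⁅η, x⁆ := hT2 y ξ ⁅η, x⁆ hy hξ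
  have t3 : B x ⁅(π' ⁅ξ, y⁆ : D), η⁆ = -S ⁅x, η⁆ ⁅ξ, y⁆ := hT1 x ⁅ξ, y⁆ η hx hη
  have t4 : B x ⁅ξ, (π' ⁅η, y⁆ : D)⁆ = S ⁅x, ξ⁆ ⁅η, y⁆ := hT2 x ξ ⁅η, y⁆ hx hξ
  rw [t1, t2, t3, t4]
  linear_combination s1 - s2 + hS2 - hS1 + hFin


end Aux

/-- Manin triples give Lie bialgebras: if `B` is a nondegenerate
invariant symmetric pairing on `𝔡` and `g, g' ⊂ 𝔡` are complementary Lagrangian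
(isotropic) Lie subalgebras, then there is a unique linear `δ : 𝔤 → 𝔤 ⊗ 𝔤` dual to the
bracket of `𝔤* = g'`; it is antisymmetric, a 1-cocycle for the adjoint action, and its
dual map — the Lie bracket of `g' ≅ 𝔤*` — satisfies the Jacobi identity. -/
theorem maninTriple_lieBialgebra
    (B : D →ₗ[k] D →ₗ[k] k)
    (hBsymm : ∀ x y, B x y = B y x)
    (hBinv : ∀ x y z, B ⁅x, y⁆ z = B x ⁅y, z⁆)
    (hBnd : ∀ x : D, (∀ y, B x y = 0) → x = 0)
    (g g' : LieSubalgebra k D)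
    (hiso : ∀ x y : D, x ∈ g → y ∈ g → B x y = 0)
    (hiso' : ∀ x y : D, x ∈ g' → y ∈ g' → B x y = 0)
    (hcompl : IsCompl g.toSubmodule g'.toSubmodule) :
    ∃! δ : g →ₗ[k] (g ⊗[k] g),
      (∀ (x : g) (ξ η : D) (hξ : ξ ∈ g') (hη : η ∈ g'),
          pairSq B g ξ η (δ x) = B (x : D) ⁅ξ, η⁆) ∧
      (∀ x : g, (TensorProduct.comm k g g) (δ x) = - δ x) ∧
      (∀ x y : g, δ ⁅x, y⁆ = adSq g x (δ y) - adSq g y (δ x)) ∧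
      (∀ ξ η ζ : g', ⁅⁅ξ, η⁆, ζ⁆ + ⁅⁅η, ζ⁆, ξ⁆ + ⁅⁅ζ, ξ⁆, η⁆ = 0) := by
  classical
  haveI hfdg : FiniteDimensional k g :=
    FiniteDimensional.finiteDimensional_submodule g.toSubmodule
  haveI hfdg' : FiniteDimensional k g' :=
    FiniteDimensional.finiteDimensional_submodule g'.toSubmodule
  set π : D →ₗ[k] g.toSubmodule := g.toSubmodule.linearProjOfIsCompl g'.toSubmodule hcompl
    with hπdef
  set π' : D →ₗ[k] g'.toSubmodule :=
    g'.toSubmodule.linearProjOfIsCompl g.toSubmodule hcompl.symm with hπ'def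
  have hdec : ∀ u : D, (π u : D) + (π' u : D) = u := fun u =>
    Submodule.projection_add_projection_eq_self hcompl u
  have hπg : ∀ u : D, (π u : D) ∈ g := fun u => (π u).2
  have hπ'g' : ∀ u : D, (π' u : D) ∈ g' := fun u => (π' u).2
  -- the two duality maps
  set Φ : g' →ₗ[k] Module.Dual k g :=
    (LinearMap.lcomp k k g.toSubmodule.subtype).comp (B.comp g'.toSubmodule.subtype) with hΦdef
  set Ψ : g →ₗ[k] Module.Dual k g' :=
    (LinearMap.lcomp k k g'.toSubmodule.subtype).comp (B.comp g.toSubmodule.subtype) with hΨdef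
  have hΦapp : ∀ (ξ : g') (y : g), Φ ξ y = B (ξ : D) (y : D) := fun _ _ => rfl
  have hΨapp : ∀ (x : g) (η : g'), Ψ x η = B (x : D) (η : D) := fun _ _ => rfl
  have hΦinj : Function.Injective Φ := by
    rw [← LinearMap.ker_eq_bot, LinearMap.ker_eq_bot']
    intro ξ hξ0
    have hz : (ξ : D) = 0 := by
      apply hBnd
      intro u
      have h1 : B (ξ : D) (π u : D) = 0 := by
        have := congrArg (fun (l : Module.Dual k g) => l (π u)) hξ0
        simpa [hΦapp] using this
      have h2' : B (ξ : D) (π' u : D) = 0 := hiso' _ _ ξ.2 (hπ'g' u)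
      calc B (ξ : D) u = B (ξ : D) ((π u : D) + (π' u : D)) := by rw [hdec u]
        _ = B (ξ : D) (π u : D) + B (ξ : D) (π' u : D) := map_add _ _ _
        _ = 0 := by rw [h1, h2']; ring
    exact Subtype.ext hz
  have hΨinj : Function.Injective Ψ := by
    rw [← LinearMap.ker_eq_bot, LinearMap.ker_eq_bot']
    intro x hx0
    have hz : (x : D) = 0 := by
      apply hBnd
      intro u
      have h1 : B (x : D) (π' u : D) = 0 := by
        have := congrArg (fun (l : Module.Dual k g') => l (π' u)) hx0
        simpa [hΨapp] using this
      have h2' : B (x : D) (π u : D) = 0 := hiso _ _ x.2 (hπg u)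
      calc B (x : D) u = B (x : D) ((π u : D) + (π' u : D)) := by rw [hdec u]
        _ = B (x : D) (π u : D) + B (x : D) (π' u : D) := map_add _ _ _
        _ = 0 := by rw [h1, h2']; ring
    exact Subtype.ext hz
  have hrank : Module.finrank k g' = Module.finrank k (Module.Dual k g) := by
    have r1 : Module.finrank k g' ≤ Module.finrank k (Module.Dual k g) :=
      LinearMap.finrank_le_finrank_of_injective hΦinj
    have r2 : Module.finrank k g ≤ Module.finrank k (Module.Dual k g') :=
      LinearMap.finrank_le_finrank_of_injective hΨinj
    rw [Subspace.dual_finrank_eq]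
    rw [Subspace.dual_finrank_eq] at r1
    rw [Subspace.dual_finrank_eq] at r2
    exact le_antisymm r1 r2
  have hΦbij : Function.Bijective Φ :=
    ⟨hΦinj, (LinearMap.injective_iff_surjective_of_finrank_eq_finrank hrank).mp hΦinj⟩
  set E : g' ≃ₗ[k] Module.Dual k g := LinearEquiv.ofBijective Φ hΦbij with hEdef
  set e : Module.Basis (Fin (Module.finrank k g)) k g := Module.finBasis k g with hedef
  set f : Module.Basis (Fin (Module.finrank k g)) k g' := e.dualBasis.map E.symm with hfdef
  have hEf : ∀ i, E (f i) = e.dualBasis i := by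
    intro i
    rw [hfdef, Module.Basis.map_apply, LinearEquiv.apply_symm_apply]
  have hBf : ∀ i j, B (f i : D) (e j : D) = if j = i then 1 else 0 := by
    intro i j
    have h1 : B (f i : D) (e j : D) = Φ (f i) (e j) := rfl
    have h2 : Φ (f i) = E (f i) := rfl
    rw [h1, h2, hEf i, Module.Basis.dualBasis_apply_self]
  -- expansion of elements of g' in terms of f
  have hexpD : ∀ ξ : g', (ξ : D) = ∑ i, B (ξ : D) (e i : D) • (f i : D) := by
    intro ξ
    have hrepr : ∀ i, f.repr ξ i = B (ξ : D) (e i : D) := by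
      intro i
      rw [hfdef, Module.Basis.map_repr]
      simp only [LinearEquiv.trans_apply, LinearEquiv.symm_symm]
      rw [Module.Basis.dualBasis_repr]
      rfl
    have h1 : ξ = ∑ i, f.repr ξ i • f i := (f.sum_repr ξ).symm
    have h2 : ξ = ∑ i, B (ξ : D) (e i : D) • f i := by
      conv_lhs => rw [h1]
      exact Finset.sum_congr rfl fun i _ => by rw [hrepr i]
    calc (ξ : D) = ((∑ i, B (ξ : D) (e i : D) • f i : g') : D) := by rw [← h2]
      _ = ∑ i, B (ξ : D) (e i : D) • (f i : D) := by
          push_cast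
          rfl
  -- the cobracket
  set δ : g →ₗ[k] (g ⊗[k] g) :=
    ∑ i, ∑ j, LinearMap.smulRight
      ((B.flip ⁅(f i : D), (f j : D)⁆).comp g.toSubmodule.subtype) (e i ⊗ₜ[k] e j) with hδdef
  have hδapp : ∀ x : g,
      δ x = ∑ i, ∑ j, B (x : D) ⁅(f i : D), (f j : D)⁆ • (e i ⊗ₜ[k] e j) := by
    intro x
    rw [hδdef]
    simp only [LinearMap.sum_apply, LinearMap.smulRight_apply, LinearMap.comp_apply,
      LinearMap.flip_apply, Submodule.subtype_apply]
    rfl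
  -- pairing of δ against basis elements of g'
  have hpairδ : ∀ (x : g) (a b : Fin (Module.finrank k g)),
      pairSq B g (f a : D) (f b : D) (δ x) = B (x : D) ⁅(f a : D), (f b : D)⁆ := by
    intro x a b
    rw [hδapp]
    rw [map_sum]
    have hterm : ∀ i, (pairSq B g (f a : D) (f b : D))
        (∑ j, B (x : D) ⁅(f i : D), (f j : D)⁆ • (e i ⊗ₜ[k] e j))
        = ∑ j, B (x : D) ⁅(f i : D), (f j : D)⁆ *
            ((if i = a then (1:k) else 0) * (if j = b then (1:k) else 0)) := by
      intro i
      rw [map_sum]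
      refine Finset.sum_congr rfl fun j _ => ?_
      rw [map_smul, smul_eq_mul, pairSq_tmul]
      rw [hBsymm (e i : D) (f a : D), hBsymm (e j : D) (f b : D), hBf, hBf]
    rw [Finset.sum_congr rfl fun i _ => hterm i]
    simp [Finset.sum_ite_eq', mul_ite]
  -- pairing of δ against general elements of g'
  have hpairδ' : ∀ (x : g) (ξ η : g'),
      pairSq B g (ξ : D) (η : D) (δ x) = B (x : D) ⁅(ξ : D), (η : D)⁆ := by
    intro x ξ η
    conv_lhs => rw [hexpD ξ]
    rw [pairSq_sum_left]
    have hstep : ∀ i, pairSq B g (B (ξ : D) (e i : D) • (f i : D)) (η : D) (δ x)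
        = B (ξ : D) (e i : D) * B (x : D) ⁅(f i : D), (η : D)⁆ := by
      intro i
      rw [pairSq_smul_left, LinearMap.smul_apply, smul_eq_mul]
      congr 1
      conv_lhs => rw [hexpD η]
      rw [pairSq_sum_right]
      have hstep2 : ∀ j, pairSq B g (f i : D) (B (η : D) (e j : D) • (f j : D)) (δ x)
          = B (η : D) (e j : D) * B (x : D) ⁅(f i : D), (f j : D)⁆ := by
        intro j
        rw [pairSq_smul_right, LinearMap.smul_apply, smul_eq_mul, hpairδ]
      rw [Finset.sum_congr rfl fun j _ => hstep2 j]
      conv_rhs => rw [hexpD η]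
      rw [lieSum_right, map_sum]
      refine Finset.sum_congr rfl fun j _ => ?_
      rw [lie_smul, map_smul, smul_eq_mul]
    rw [Finset.sum_congr rfl fun i _ => hstep i]
    conv_rhs => rw [hexpD ξ]
    rw [lieSum_left, map_sum]
    refine Finset.sum_congr rfl fun i _ => ?_
    rw [smul_lie, map_smul, smul_eq_mul]
  -- injectivity of the pairing against basis elements
  have hkey : ∀ t : g ⊗[k] g,
      (∀ a b, pairSq B g (f a : D) (f b : D) t = 0) → t = 0 := by
    intro t ht
    set bT : Module.Basis (Fin (Module.finrank k g) × Fin (Module.finrank k g)) k (g ⊗[k] g) :=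
      Module.Basis.tensorProduct e e with hbTdef
    have hco : ∀ a b, pairSq B g (f a : D) (f b : D) = bT.coord (a, b) := by
      intro a b
      apply bT.ext
      rintro ⟨i, j⟩
      rw [hbTdef, Module.Basis.tensorProduct_apply, pairSq_tmul]
      rw [hBsymm (e i : D) (f a : D), hBsymm (e j : D) (f b : D), hBf, hBf]
      rw [Module.Basis.coord_apply, ← hbTdef, ← Module.Basis.tensorProduct_apply, ← hbTdef]
      rw [Module.Basis.repr_self, Finsupp.single_apply]
      by_cases h1 : i = a <;> by_cases h2 : j = b <;> simp [h1, h2, Prod.ext_iff]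
    apply bT.ext_elem
    rintro ⟨a, b⟩
    rw [LinearEquiv.map_zero, Finsupp.zero_apply, ← Module.Basis.coord_apply, ← hco a b]
    exact ht a b
  -- the comm lemma
  have hcommlem : ∀ (ξ η : D) (t : g ⊗[k] g),
      pairSq B g ξ η ((TensorProduct.comm k g g) t) = pairSq B g η ξ t := by
    intro ξ η t
    have : (pairSq B g ξ η) ∘ₗ (TensorProduct.comm k g g).toLinearMap = pairSq B g η ξ := by
      apply TensorProduct.ext'
      intro a b
      simp only [LinearMap.comp_apply, LinearEquiv.coe_coe, TensorProduct.comm_tmul]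
      rw [pairSq_tmul, pairSq_tmul]
      ring
    exact LinearMap.congr_fun this t
  -- the adjoint action lemma
  have hadlem : ∀ (ξ η : D) (x : g) (t : g ⊗[k] g),
      pairSq B g ξ η (adSq g x t)
        = pairSq B g ⁅ξ, (x : D)⁆ η t + pairSq B g ξ ⁅η, (x : D)⁆ t := by
    intro ξ η x t
    have hfun : (pairSq B g ξ η) ∘ₗ adSq g x
        = pairSq B g ⁅ξ, (x : D)⁆ η + pairSq B g ξ ⁅η, (x : D)⁆ := by
      apply TensorProduct.ext'
      intro a b
      have hb1 : ∀ (c : g) (w : D), B ((⁅x, c⁆ : g) : D) w = B (c : D) ⁅w, (x : D)⁆ := by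
        intro c w
        rw [LieSubalgebra.coe_bracket]
        rw [hBsymm ⁅(x : D), (c : D)⁆ w, ← hBinv w (x : D) (c : D),
          hBsymm ⁅w, (x : D)⁆ (c : D)]
      simp only [LinearMap.comp_apply, LinearMap.add_apply, adSq, TensorProduct.map_tmul,
        LinearMap.id_coe, id_eq, LieAlgebra.ad_apply]
      rw [map_add, pairSq_tmul, pairSq_tmul, pairSq_tmul, pairSq_tmul]
      rw [hb1 a ξ, hb1 b η]
    exact LinearMap.congr_fun hfun t
  -- splitting lemma : pairing δ with arbitrary left slot
  have hsplit_left : ∀ (z : g) (u : D) (η : g'),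
      pairSq B g u (η : D) (δ z) = B (z : D) ⁅(π' u : D), (η : D)⁆ := by
    intro z u η
    have h0 : pairSq B g (π u : D) (η : D) = 0 := pairSq_left_zero B g hiso (hπg u) _
    calc pairSq B g u (η : D) (δ z)
        = pairSq B g ((π u : D) + (π' u : D)) (η : D) (δ z) := by rw [hdec u]
      _ = pairSq B g (π u : D) (η : D) (δ z) + pairSq B g (π' u : D) (η : D) (δ z) := by
          rw [pairSq_add_left, LinearMap.add_apply]
      _ = pairSq B g ((⟨(π' u : D), hπ'g' u⟩ : g') : D) (η : D) (δ z) := by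
          rw [h0]; simp
      _ = B (z : D) ⁅(π' u : D), (η : D)⁆ := by
          rw [hpairδ' z ⟨(π' u : D), hπ'g' u⟩ η]
  have hsplit_right : ∀ (z : g) (ξ : g') (v : D),
      pairSq B g (ξ : D) v (δ z) = B (z : D) ⁅(ξ : D), (π' v : D)⁆ := by
    intro z ξ v
    have h0 : pairSq B g (ξ : D) (π v : D) = 0 := pairSq_right_zero B g hiso _ (hπg v)
    calc pairSq B g (ξ : D) v (δ z)
        = pairSq B g (ξ : D) ((π v : D) + (π' v : D)) (δ z) := by rw [hdec v]
      _ = pairSq B g (ξ : D) (π v : D) (δ z) + pairSq B g (ξ : D) (π' v : D) (δ z) := by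
          rw [pairSq_add_right, LinearMap.add_apply]
      _ = pairSq B g (ξ : D) ((⟨(π' v : D), hπ'g' v⟩ : g') : D) (δ z) := by
          rw [h0]; simp
      _ = B (z : D) ⁅(ξ : D), (π' v : D)⁆ := by
          rw [hpairδ' z ξ ⟨(π' v : D), hπ'g' v⟩]
  refine ⟨δ, ⟨?_, ?_, ?_, ?_⟩, ?_⟩
  · -- defining property
    intro x ξ η hξ hη
    exact hpairδ' x ⟨ξ, hξ⟩ ⟨η, hη⟩
  · -- antisymmetry
    intro x
    rw [← sub_eq_zero]
    apply hkey
    intro a b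
    rw [map_sub, map_neg]
    rw [hcommlem, hpairδ, hpairδ]
    have hsk : ⁅(f b : D), (f a : D)⁆ = -⁅(f a : D), (f b : D)⁆ := by
      rw [← lie_skew ((f a : D)) ((f b : D)), neg_neg]
    rw [hsk, map_neg]
    exact sub_self _
  · -- cocycle identity
    intro x y
    rw [← sub_eq_zero]
    apply hkey
    intro a b
    set ξ : g' := f a
    set η : g' := f b
    rw [map_sub, map_sub]
    rw [hadlem (ξ : D) (η : D) x (δ y), hadlem (ξ : D) (η : D) y (δ x)]
    rw [hsplit_left y ⁅(ξ : D), (x : D)⁆ η, hsplit_right y ξ ⁅(η : D), (x : D)⁆,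
        hsplit_left x ⁅(ξ : D), (y : D)⁆ η, hsplit_right x ξ ⁅(η : D), (y : D)⁆]
    rw [hpairδ' ⁅x, y⁆ ξ η, LieSubalgebra.coe_bracket]
    have := manin_scalar B g g' hBsymm hBinv hiso hiso' hcompl
      (x : D) (y : D) (ξ : D) (η : D) x.2 y.2 ξ.2 η.2
    rw [← hπ'def] at this
    linear_combination -this
  · -- Jacobi identity in g'
    intro ξ η ζ
    have j : ⁅ξ, ⁅η, ζ⁆⁆ + ⁅η, ⁅ζ, ξ⁆⁆ + ⁅ζ, ⁅ξ, η⁆⁆ = 0 := lie_jacobi ξ η ζ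
    have g1 : ⁅⁅ξ, η⁆, ζ⁆ = -⁅ζ, ⁅ξ, η⁆⁆ := (lie_skew ⁅ξ, η⁆ ζ).symm
    have g2 : ⁅⁅η, ζ⁆, ξ⁆ = -⁅ξ, ⁅η, ζ⁆⁆ := (lie_skew ⁅η, ζ⁆ ξ).symm
    have g3 : ⁅⁅ζ, ξ⁆, η⁆ = -⁅η, ⁅ζ, ξ⁆⁆ := (lie_skew ⁅ζ, ξ⁆ η).symm
    rw [g1, g2, g3]
    have : -⁅ζ, ⁅ξ, η⁆⁆ + -⁅ξ, ⁅η, ζ⁆⁆ + -⁅η, ⁅ζ, ξ⁆⁆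
        = -(⁅ξ, ⁅η, ζ⁆⁆ + ⁅η, ⁅ζ, ξ⁆⁆ + ⁅ζ, ⁅ξ, η⁆⁆) := by abel
    rw [this, j, neg_zero]
  · -- uniqueness
    intro δ₂ hδ₂
    obtain ⟨h1, -, -, -⟩ := hδ₂
    apply LinearMap.ext
    intro x
    rw [← sub_eq_zero]
    apply hkey
    intro a b
    rw [map_sub, hpairδ, h1 x (f a : D) (f b : D) (f a).2 (f b).2, sub_self]

end
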